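/- Let F be the 4×4 real symmetric matrix with F₁₁ = -(c+d+x), F₂₂ = 1-c+d-x, F₃₃ = 1+c-d-x, F₄₄ = c+d-x, F₂₃ = F₃₂ = -1, and all other entries zero. If F is positive semidefinite, then x ≤ 0, |c + d| ≤ -x, |c - d| ≤ 1 - x, and (c-d)² ≤ x(x-2). -/

import Mathlib

open Matrix

theorem F_posSemidef_constraints (c d x : ℝ)
    (hF : (!![-(c + d + x), 0, 0, 0;
              0, 1 - c + d - x, -1, 0;
              0, -1, 1 + c - d - x, 0;
              0, 0, 0, c + d - x] : Matrix (Fin 4) (Fin 4) ℝ).PosSemidef) :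
    x ≤ 0 ∧ |c + d| ≤ -x ∧ |c - d| ≤ 1 - x ∧ (c - d) ^ 2 ≤ x * (x - 2) := by
  have key : ∀ p q r s : ℝ,
      0 ≤ -(c + d + x) * p * p + (1 - c + d - x) * q * q - 2 * q * r
        + (1 + c - d - x) * r * r + (c + d - x) * s * s := by
    intro p q r s
    have := hF.dotProduct_mulVec_nonneg ![p, q, r, s]
    simp [mulVec, dotProduct, Fin.sum_univ_four, vecHead, vecTail] at this
    nlinarith [this]
  have h1 := key 1 0 0 0
  have h4 := key 0 0 0 1
  have h2 := key 0 1 0 0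
  have h3 := key 0 0 1 0
  have hab1 := key 0 (1 + c - d - x) 1 0
  have hab2 := key 0 1 (1 - c + d - x) 0
  have hsum := key 0 1 1 0
  have hx : x ≤ 0 := by nlinarith
  refine ⟨hx, abs_le.2 ⟨by nlinarith, by nlinarith⟩,
    abs_le.2 ⟨by nlinarith, by nlinarith⟩, ?_⟩
  nlinarith [sq_nonneg (c - d), hab1, hab2, hsum, h2, h3]
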